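/- For every reward function f and all N, T ∈ ℕ with T ≥ 4 and 1 ≤ N ≤ T/2, one has Σ_{n=1}^T f(n) ≤ (25T²/(32N))·f(N). -/

import Mathlib

open scoped Classical

/-- A reward function: bounded in [0,1], nondecreasing, with decreasing marginal returns. -/
def IsRewardFn (f : ℕ → ℝ) : Prop :=
  (∀ n, 0 ≤ f n) ∧ (∀ n, f n ≤ 1) ∧ Monotone f ∧
    ∀ n, 1 ≤ n → f (n + 1) - f n ≤ f n - f (n - 1)

/-- Cumulative reward from pulling an arm with reward function `f` for `N` pulls. -/
noncomputable def Rew (f : ℕ → ℝ) (N : ℕ) : ℝ := ∑ n ∈ Finset.Icc 1 N, f n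

lemma gauss_real (M : ℕ) : ∑ n ∈ Finset.Ioc 0 M, (n : ℝ) = M * (M + 1) / 2 := by
  induction M with
  | zero => simp
  | succ m ih =>
    rw [Finset.sum_Ioc_succ_top (Nat.zero_le _), ih]
    push_cast
    ring

/-- For `T ≥ 4` and `1 ≤ N ≤ T/2`, the `T`-step cumulative reward is at most
`(25T²/(32N)) · f N`. -/
theorem rew_T_upper_bound_small (f : ℕ → ℝ) (hf : IsRewardFn f) (N T : ℕ)
    (hT : 4 ≤ T) (hNlow : 1 ≤ N) (hNhigh : 2 * N ≤ T) :
    Rew f T ≤ (25 * (T : ℝ) ^ 2 / (32 * (N : ℝ))) * f N := by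
  obtain ⟨h0, h1, hmono, hconc⟩ := hf
  set Δ : ℕ → ℝ := fun k => f (k + 1) - f k with hΔ
  have hanti : Antitone Δ := antitone_nat_of_succ_le (fun n => by
    have := hconc (n + 1) (by omega)
    simpa [hΔ] using this)
  have hNpos : (0 : ℝ) < N := by exact_mod_cast hNlow
  have hNT : N ≤ T := by omega
  -- f M - f 0 = sum of deltas
  have hsum : ∀ M, ∑ k ∈ Finset.range M, Δ k = f M - f 0 := fun M =>
    Finset.sum_range_sub (fun k => f k) M
  -- key1 : N * Δ (N-1) ≤ f N
  have key1 : (N : ℝ) * Δ (N - 1) ≤ f N := by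
    have h : (N : ℝ) * Δ (N - 1) ≤ ∑ k ∈ Finset.range N, Δ k := by
      have := Finset.card_nsmul_le_sum (Finset.range N) Δ (Δ (N - 1))
        (fun k hk => hanti (by
          have := Finset.mem_range.mp hk; omega))
      simpa [nsmul_eq_mul] using this
    have := hsum N
    have hf0 : 0 ≤ f 0 := h0 0
    linarith [h, this]
  -- key2 : for n ≥ N, f n ≤ f N + (n - N) * Δ (N - 1)
  have key2 : ∀ n, N ≤ n → f n ≤ f N + ((n : ℝ) - N) * Δ (N - 1) := by
    intro n hn
    induction n, hn using Nat.le_induction with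
    | base => simp
    | succ m hm ih =>
      have hd : Δ m ≤ Δ (N - 1) := hanti (by omega)
      have : f (m + 1) = f m + Δ m := by simp [hΔ]
      push_cast
      rw [this]
      have : f m + Δ m ≤ (f N + ((m : ℝ) - N) * Δ (N - 1)) + Δ (N - 1) := by
        linarith
      linarith
  -- key3 : for n ≥ N, f n ≤ (n / N) * f N
  have key3 : ∀ n, N ≤ n → f n ≤ ((n : ℝ) / N) * f N := by
    intro n hn
    have hnN : (0 : ℝ) ≤ (n : ℝ) - N := by
      have : (N : ℝ) ≤ n := by exact_mod_cast hn
      linarith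
    have hd : Δ (N - 1) ≤ f N / N := by
      rw [le_div_iff₀ hNpos]
      linarith [key1]
    have hk := key2 n hn
    have h2 : ((n : ℝ) - N) * Δ (N - 1) ≤ ((n : ℝ) - N) * (f N / N) :=
      mul_le_mul_of_nonneg_left hd hnN
    have h3 : f n ≤ f N + ((n : ℝ) - N) * (f N / N) :=
      le_trans hk (add_le_add_right h2 (f N))
    calc f n ≤ f N + ((n : ℝ) - N) * (f N / N) := h3
      _ = ((n : ℝ) / N) * f N := by field_simp; ring
  -- split the sum
  have hsplit : Rew f T = ∑ n ∈ Finset.Ioc 0 N, f n + ∑ n ∈ Finset.Ioc N T, f n := by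
    rw [Rew, ← Finset.Icc_add_one_left_eq_Ioc]
    exact (Finset.sum_Ioc_consecutive _ (Nat.zero_le N) hNT).symm
  have hb1 : ∑ n ∈ Finset.Ioc 0 N, f n ≤ (N : ℝ) * f N := by
    have := Finset.sum_le_card_nsmul (Finset.Ioc 0 N) f (f N)
      (fun k hk => hmono (Finset.mem_Ioc.mp hk).2)
    simpa [nsmul_eq_mul] using this
  have hb2 : ∑ n ∈ Finset.Ioc N T, f n ≤ (f N / N) * ((T : ℝ) * (T + 1) / 2 - (N : ℝ) * (N + 1) / 2) := by
    have h : ∑ n ∈ Finset.Ioc N T, f n ≤ ∑ n ∈ Finset.Ioc N T, ((n : ℝ) / N) * f N := by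
      apply Finset.sum_le_sum
      intro n hn
      exact key3 n (le_of_lt (Finset.mem_Ioc.mp hn).1)
    have hs : ∑ n ∈ Finset.Ioc N T, ((n : ℝ) / N) * f N
        = (f N / N) * ∑ n ∈ Finset.Ioc N T, (n : ℝ) := by
      rw [Finset.mul_sum]
      apply Finset.sum_congr rfl
      intro n _; ring
    have hsum2 : ∑ n ∈ Finset.Ioc N T, (n : ℝ)
        = (T : ℝ) * (T + 1) / 2 - (N : ℝ) * (N + 1) / 2 := by
      have := Finset.sum_Ioc_consecutive (fun n => (n : ℝ)) (Nat.zero_le N) hNT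
      have g1 := gauss_real N
      have g2 := gauss_real T
      linarith
    rw [hs, hsum2] at h
    exact h
  have hfN : 0 ≤ f N := h0 N
  have hTr : (4 : ℝ) ≤ T := by exact_mod_cast hT
  have hNr : (1 : ℝ) ≤ N := by exact_mod_cast hNlow
  have h2N : 2 * (N : ℝ) ≤ T := by exact_mod_cast hNhigh
  have hfinal : (N : ℝ) * f N + (f N / N) * ((T : ℝ) * (T + 1) / 2 - (N : ℝ) * (N + 1) / 2)
      ≤ (25 * (T : ℝ) ^ 2 / (32 * (N : ℝ))) * f N := by
    have hL : (N : ℝ) * f N + (f N / N) * ((T : ℝ) * (T + 1) / 2 - (N : ℝ) * (N + 1) / 2)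
        = ((N : ℝ) ^ 2 * f N + f N * ((T : ℝ) * (T + 1) / 2 - (N : ℝ) * (N + 1) / 2)) / N := by
      field_simp
    rw [hL, div_mul_eq_mul_div, div_le_div_iff₀ hNpos (by positivity)]
    nlinarith [mul_nonneg hfN (mul_nonneg (sub_nonneg.mpr h2N) (by positivity : (0:ℝ) ≤ (T:ℝ) + 2 * N)),
      mul_nonneg hfN (sub_nonneg.mpr hNr),
      mul_nonneg hfN (by linarith : (0:ℝ) ≤ (T:ℝ) - 4),
      mul_nonneg hfN (mul_nonneg (by linarith : (0:ℝ) ≤ (T:ℝ)) (by linarith : (0:ℝ) ≤ (T:ℝ) - 4))]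
  linarith [hsplit, hb1, hb2, hfinal]
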